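/- If X is an L-embedded Banach space, then for every bounded sequence (x_k) in X, 2·d̂(clust_{X**}(x_k), X) ≤ δ_X(x_k). -/

import Mathlib

open Filter Topology NormedSpace

/-- The set of weak* cluster points in the bidual of a sequence `(x k)` in `X`. -/
def weakStarClusterPoints {X : Type*} [NormedAddCommGroup X] [NormedSpace ℝ X]
    (x : ℕ → X) : Set (StrongDual ℝ (StrongDual ℝ X)) :=
  {y | MapClusterPt (StrongDual.toWeakDual y) atTop
        fun k => StrongDual.toWeakDual (inclusionInDoubleDual ℝ X (x k))}

/-- `δ_X (x k)`: the (norm) diameter of the set of weak* cluster points of `(x k)` in `X**`. -/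
noncomputable def deltaSeq {X : Type*} [NormedAddCommGroup X] [NormedSpace ℝ X]
    (x : ℕ → X) : ℝ :=
  Metric.diam (weakStarClusterPoints x)

/-- `d̂(A, X)`: the non-symmetrized Hausdorff distance from `A ⊆ X**` to (the canonical
image of) `X`, i.e. `sup_{a ∈ A} dist (a, X)`. -/
noncomputable def dHat {X : Type*} [NormedAddCommGroup X] [NormedSpace ℝ X]
    (A : Set (StrongDual ℝ (StrongDual ℝ X))) : ℝ :=
  sSup ((fun y => Metric.infDist y (Set.range fun v : X => inclusionInDoubleDual ℝ X v)) '' A)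

/-- `X` is `L`-embedded: there is a linear projection of `X**` onto the canonical copy of `X`
satisfying `‖y‖ = ‖Py‖ + ‖y - Py‖` for all `y ∈ X**`. -/
def IsLEmbedded (X : Type*) [NormedAddCommGroup X] [NormedSpace ℝ X] : Prop :=
  ∃ P : StrongDual ℝ (StrongDual ℝ X) →ₗ[ℝ] StrongDual ℝ (StrongDual ℝ X),
    (∀ y, P (P y) = P y) ∧
    Set.range P = Set.range (fun v : X => inclusionInDoubleDual ℝ X v) ∧
    ∀ y, ‖y‖ = ‖P y‖ + ‖y - P y‖

open Metric Bornology

section Helpers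

/-- A cluster value of a map that eventually lies in a closed set lies in that set. -/
lemma mapClusterPt_mem_closed {α β : Type*} [TopologicalSpace β] {u : α → β} {F : Filter α}
    {p : β} (h : MapClusterPt p F u) {S : Set β} (hS : IsClosed S) (hu : ∀ᶠ a in F, u a ∈ S) :
    p ∈ S := by
  have h1 : Filter.map u F ≤ Filter.principal S := Filter.le_principal_iff.2 hu
  have h2 : ClusterPt p (Filter.principal S) := (h.clusterPt).mono h1
  have := mem_closure_iff_clusterPt.2 h2
  rwa [hS.closure_eq] at this

/-- A cluster value of a convergent real map equals the limit. -/
lemma mapClusterPt_eq_limit {α : Type*} {F : Filter α} [F.NeBot] {u : α → ℝ} {p L : ℝ}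
    (h : MapClusterPt p F u) (hL : Tendsto u F (𝓝 L)) : p = L := by
  have h1 : ClusterPt p (Filter.map u F) := h.clusterPt
  have h2 : Filter.map u F ≤ 𝓝 L := hL
  haveI hne : NeBot (𝓝 p ⊓ Filter.map u F) := h1
  have : NeBot (𝓝 p ⊓ 𝓝 L) :=
    Filter.neBot_of_le (f := 𝓝 p ⊓ Filter.map u F) (inf_le_inf_left _ h2)
  exact (eq_of_nhds_neBot this)

/-- Approximate norming vector for an element of a dual space. -/
lemma exists_approx_norming {Y : Type*} [NormedAddCommGroup Y] [NormedSpace ℝ Y]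
    (w : Y →L[ℝ] ℝ) {δ : ℝ} (hδ : 0 < δ) : ∃ f : Y, ‖f‖ ≤ 1 ∧ ‖w‖ - δ < w f := by
  by_contra hcon
  push_neg at hcon
  have hb : ∀ f : Y, ‖f‖ ≤ 1 → |w f| ≤ ‖w‖ - δ := by
    intro f hf
    refine abs_le.2 ⟨?_, hcon f hf⟩
    have := hcon (-f) (by simpa using hf)
    simpa [neg_le] using this
  have h0 : (0:ℝ) ≤ ‖w‖ - δ := by
    have := hb 0 (by simp)
    simpa using le_trans (abs_nonneg _) this
  have : ‖w‖ ≤ ‖w‖ - δ := by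
    refine ContinuousLinearMap.opNorm_le_bound w h0 ?_
    intro f
    rcases eq_or_ne f 0 with rfl | hf
    · simp
    · have hfn : 0 < ‖f‖ := norm_pos_iff.2 hf
      have := hb (‖f‖⁻¹ • f) (by
        rw [norm_smul, norm_inv, norm_norm]
        exact le_of_eq (inv_mul_cancel₀ hfn.ne'))
      rw [map_smul] at this
      have habs : |w f| ≤ (‖w‖ - δ) * ‖f‖ := by
        rw [smul_eq_mul, abs_mul, abs_inv, abs_norm] at this
        calc |w f| = ‖f‖ * (‖f‖⁻¹ * |w f|) := by field_simp
        _ ≤ ‖f‖ * (‖w‖ - δ) := by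
            exact mul_le_mul_of_nonneg_left this hfn.le
        _ = (‖w‖ - δ) * ‖f‖ := mul_comm _ _
      simpa [Real.norm_eq_abs] using habs
  linarith

end Helpers

section Cluster

variable {X : Type*} [NormedAddCommGroup X] [NormedSpace ℝ X]

lemma norm_incl_eq (v : X) : ‖inclusionInDoubleDual ℝ X v‖ = ‖v‖ :=
  (inclusionInDoubleDualLi ℝ (E := X)).norm_map v

/-- From a weak* cluster point we can extract indices far out where finitely many
functionals are nearly reproduced. -/
lemma cluster_frequently {x : ℕ → X} {t : StrongDual ℝ (StrongDual ℝ X)} (ht : t ∈ weakStarClusterPoints x)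
    (F : Finset (StrongDual ℝ X)) {δ : ℝ} (hδ : 0 < δ) (N : ℕ) :
    ∃ k, N ≤ k ∧ ∀ f ∈ F, |f (x k) - t f| < δ := by
  classical
  set V : Set (WeakDual ℝ (StrongDual ℝ X)) := {φ | ∀ f ∈ F, |φ f - t f| < δ} with hV
  have hVopen : IsOpen V := by
    have : V = ⋂ f ∈ F, {φ : WeakDual ℝ (StrongDual ℝ X) | |φ f - t f| < δ} := by
      ext φ; simp [hV]
    rw [this]
    refine isOpen_biInter_finset (fun f _ => ?_)
    have hc : Continuous fun φ : WeakDual ℝ (StrongDual ℝ X) => |φ f - t f| :=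
      ((WeakDual.eval_continuous f).sub continuous_const).abs
    exact isOpen_lt hc continuous_const
  have hVmem : V ∈ 𝓝 (StrongDual.toWeakDual t) := by
    refine hVopen.mem_nhds ?_
    simp [hV, hδ]
  have hfreq := (mapClusterPt_iff_frequently.1 ht) V hVmem
  rcases (Filter.frequently_atTop.1 hfreq) N with ⟨k, hkN, hk⟩
  exact ⟨k, hkN, fun f hf => hk f hf⟩

lemma cluster_norm_le {x : ℕ → X} {M : ℝ} (hM : ∀ k, ‖x k‖ ≤ M)
    {p : StrongDual ℝ (StrongDual ℝ X)} (hp : p ∈ weakStarClusterPoints x) : ‖p‖ ≤ M := by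
  have hM0 : (0:ℝ) ≤ M := le_trans (norm_nonneg _) (hM 0)
  refine ContinuousLinearMap.opNorm_le_bound p hM0 (fun f => ?_)
  have hev : MapClusterPt (p f) atTop (fun k => f (x k)) := by
    have hc : ContinuousAt (fun φ : WeakDual ℝ (StrongDual ℝ X) => φ f)
        (StrongDual.toWeakDual p) := (WeakDual.eval_continuous f).continuousAt
    exact hp.continuousAt_comp hc
  have hS : IsClosed {r : ℝ | |r| ≤ M * ‖f‖} :=
    isClosed_le continuous_abs continuous_const
  have hmem : p f ∈ {r : ℝ | |r| ≤ M * ‖f‖} := by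
    refine mapClusterPt_mem_closed hev hS (Filter.Eventually.of_forall (fun k => ?_))
    have := f.le_opNorm (x k)
    have h2 : ‖f‖ * ‖x k‖ ≤ ‖f‖ * M := mul_le_mul_of_nonneg_left (hM k) (norm_nonneg f)
    simpa [Real.norm_eq_abs, mul_comm] using le_trans this h2
  simpa [Real.norm_eq_abs] using hmem

/-- Banach–Alaoglu: any subsequence of a bounded sequence has a weak* cluster point in the
bidual, which is then also a weak* cluster point of the full sequence. -/
lemma exists_cluster_of_subseq {x : ℕ → X} {M : ℝ} (hM : ∀ k, ‖x k‖ ≤ M)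
    (φ : ℕ → ℕ) (hφ : Tendsto φ atTop atTop) :
    ∃ p ∈ weakStarClusterPoints x,
      MapClusterPt (StrongDual.toWeakDual p) atTop
        (fun i => StrongDual.toWeakDual (inclusionInDoubleDual ℝ X (x (φ i)))) := by
  have hM0 : (0:ℝ) ≤ M := le_trans (norm_nonneg _) (hM 0)
  set u : ℕ → WeakDual ℝ (StrongDual ℝ X) :=
    fun i => StrongDual.toWeakDual (inclusionInDoubleDual ℝ X (x (φ i))) with hu
  have hcomp : IsCompact (WeakDual.toStrongDual ⁻¹' closedBall (0 : StrongDual ℝ (StrongDual ℝ X)) M) :=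
    WeakDual.isCompact_closedBall (0 : StrongDual ℝ (StrongDual ℝ X)) M
  have hsub : Filter.map u atTop ≤ Filter.principal
      (WeakDual.toStrongDual ⁻¹' closedBall (0 : StrongDual ℝ (StrongDual ℝ X)) M) := by
    rw [Filter.le_principal_iff, Filter.mem_map]
    refine Filter.Eventually.of_forall (fun i => ?_)
    simp only [Set.mem_preimage, Set.mem_setOf_eq, mem_closedBall, dist_zero_right]
    rw [show dist (WeakDual.toStrongDual (u i)) 0 = ‖WeakDual.toStrongDual (u i)‖ from dist_zero_right (WeakDual.toStrongDual (u i))]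
    calc ‖WeakDual.toStrongDual (u i)‖ = ‖inclusionInDoubleDual ℝ X (x (φ i))‖ := rfl
    _ = ‖x (φ i)‖ := norm_incl_eq _
    _ ≤ M := hM _
  obtain ⟨g, _, hg⟩ := hcomp.exists_mapClusterPt (f := atTop) hsub
  refine ⟨WeakDual.toStrongDual g, ?_, ?_⟩
  · -- cluster point of full sequence
    have h1 : MapClusterPt g atTop
        ((fun k => StrongDual.toWeakDual (inclusionInDoubleDual ℝ X (x k))) ∘ φ) := hg
    have h2 := MapClusterPt.of_comp (u := fun k =>
      StrongDual.toWeakDual (inclusionInDoubleDual ℝ X (x k))) hφ h1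
    simpa [weakStarClusterPoints] using h2
  · exact hg

end Cluster

section Separation

variable {X : Type*} [NormedAddCommGroup X] [NormedSpace ℝ X]

/-- From a lower bound on the norms of all convex combinations, produce a functional in the
unit ball which is uniformly large on the whole family. -/
lemma exists_sep_functional (m : ℕ) (w : Fin m → X) {β : ℝ} (hβ : 0 < β)
    (hinv : ∀ c : Fin m → ℝ, (∀ j, 0 ≤ c j) → (∑ j, c j) = 1 → β ≤ ‖∑ j, c j • w j‖) :
    ∃ f : StrongDual ℝ X, ‖f‖ ≤ 1 ∧ ∀ j, β ≤ f (w j) := by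
  rcases Nat.eq_zero_or_pos m with rfl | hm
  · exact ⟨0, by simp, fun j => j.elim0⟩
  classical
  set C : Set X := (fun c : Fin m → ℝ => ∑ j, c j • w j) '' stdSimplex ℝ (Fin m) with hC
  have hCconv : Convex ℝ C := by
    let L : (Fin m → ℝ) →ₗ[ℝ] X :=
      { toFun := fun c => ∑ j, c j • w j,
        map_add' := fun c d => by simp [add_smul, Finset.sum_add_distrib],
        map_smul' := fun r c => by simp [Finset.smul_sum, smul_smul, mul_comm] }
    have hCL : C = L '' stdSimplex ℝ (Fin m) := rfl
    rw [hCL]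
    exact (convex_stdSimplex ℝ (Fin m)).is_linear_image L.isLinear
  have hdisj : Disjoint (ball (0:X) β) C := by
    rw [Set.disjoint_left]
    rintro z hz ⟨c, hc, rfl⟩
    have := hinv c hc.1 hc.2
    rw [mem_ball, dist_zero_right] at hz
    linarith
  obtain ⟨f, u, hfu, huf⟩ := geometric_hahn_banach_open (convex_ball 0 β) isOpen_ball hCconv hdisj
  have hu0 : 0 < u := by
    have := hfu 0 (by simp [hβ])
    simpa using this
  -- ‖f‖ ≤ u / β
  have hfnorm : ∀ v : X, |f v| * β ≤ u * ‖v‖ := by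
    intro v
    by_contra hcon
    push_neg at hcon
    have hv0 : v ≠ 0 := by
      rintro rfl
      simp at hcon
    have hfv0 : 0 < |f v| := by
      rcases (abs_nonneg (f v)).lt_or_eq with h | h
      · exact h
      · exfalso; rw [← h] at hcon; simp at hcon
        nlinarith [norm_pos_iff.2 hv0, hu0]
    have hvn : 0 < ‖v‖ := norm_pos_iff.2 hv0
    set c : ℝ := (u * ‖v‖ / |f v| + β) / 2 with hc
    have hc1 : u * ‖v‖ / |f v| < c := by
      rw [hc]
      have : u * ‖v‖ / |f v| < β := by
        rw [div_lt_iff₀ hfv0]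
        nlinarith
      linarith
    have hc2 : c < β := by
      rw [hc]
      have : u * ‖v‖ / |f v| < β := by
        rw [div_lt_iff₀ hfv0]
        nlinarith
      linarith
    have hcpos : 0 < c := by
      have : 0 ≤ u * ‖v‖ / |f v| := by positivity
      rw [hc]; linarith
    set z : X := (c / ‖v‖) • v with hz
    have hzball : z ∈ ball (0:X) β := by
      rw [mem_ball, dist_zero_right, hz, norm_smul]
      rw [Real.norm_eq_abs, abs_div, abs_of_pos hcpos, abs_of_pos hvn]
      rw [div_mul_cancel₀ _ hvn.ne']
      exact hc2
    have h1 : f z < u := hfu z hzball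
    have h2 : f (-z) < u := by
      refine hfu (-z) ?_
      rw [mem_ball, dist_zero_right, norm_neg]
      rw [mem_ball, dist_zero_right] at hzball
      exact hzball
    have habs : |f z| < u := by
      rw [abs_lt]; constructor
      · have : -f z < u := by rw [← map_neg]; exact h2
        linarith
      · exact h1
    have : |f z| = (c / ‖v‖) * |f v| := by
      rw [hz, map_smul, smul_eq_mul, abs_mul, abs_div, abs_of_pos hcpos, abs_of_pos hvn]
    rw [this] at habs
    have : u * ‖v‖ / |f v| < c := hc1
    rw [div_lt_iff₀ hfv0] at this
    have : u < c / ‖v‖ * |f v| := by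
      rw [div_mul_eq_mul_div, lt_div_iff₀ hvn]
      linarith
    linarith
  -- conclude
  have hfW : ∀ j, u ≤ f (w j) := by
    intro j
    refine huf (w j) ?_
    refine ⟨fun i => if i = j then 1 else 0, ?_, ?_⟩
    · constructor
      · intro i; by_cases h : i = j <;> simp [h]
      · simp
    · simp [ite_smul]
  refine ⟨(β / u) • f, ?_, ?_⟩
  · have hb : ∀ v : X, ‖((β / u) • f) v‖ ≤ 1 * ‖v‖ := by
      intro v
      have := hfnorm v
      rw [ContinuousLinearMap.smul_apply, norm_smul, Real.norm_eq_abs, Real.norm_eq_abs,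
        abs_div, abs_of_pos hβ, abs_of_pos hu0, one_mul]
      rw [div_mul_eq_mul_div, div_le_iff₀ hu0]
      calc β * |f v| = |f v| * β := mul_comm _ _
      _ ≤ u * ‖v‖ := this
      _ = ‖v‖ * u := mul_comm _ _
    exact ContinuousLinearMap.opNorm_le_bound _ zero_le_one hb
  · intro j
    rw [ContinuousLinearMap.smul_apply, smul_eq_mul]
    rw [div_mul_eq_mul_div, le_div_iff₀ hu0]
    have := hfW j
    nlinarith

end Separation

namespace S3

variable {X : Type*} [NormedAddCommGroup X] [NormedSpace ℝ X]

lemma ev_le (w : StrongDual ℝ (StrongDual ℝ X)) (f : StrongDual ℝ X) (hf : ‖f‖ ≤ 1) : w f ≤ ‖w‖ := by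
  have h1 : ‖w f‖ ≤ ‖w‖ * ‖f‖ := w.le_opNorm f
  have h2 : ‖w‖ * ‖f‖ ≤ ‖w‖ := by nlinarith [norm_nonneg w]
  calc w f ≤ |w f| := le_abs_self _
  _ = ‖w f‖ := (Real.norm_eq_abs _).symm
  _ ≤ ‖w‖ := le_trans h1 h2

/-- The ℓ¹-type lower bound invariant for the pairs of indices chosen so far. -/
def Inv (x : ℕ → X) (β : ℝ) {J : ℕ} (idx : Fin J → ℕ × ℕ) : Prop :=
  ∀ c : Fin J → ℝ, (∀ j, 0 ≤ c j) →
    β * (∑ j, c j) ≤ ‖∑ j, c j • (x (idx j).1 - x (idx j).2)‖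

/-- The slowly decreasing constants. -/
noncomputable def βf (a ε : ℝ) (J : ℕ) : ℝ := 2*a - ε + ε / 2^J

def Good (x : ℕ → X) (a ε : ℝ) {J : ℕ} (idx : Fin J → ℕ × ℕ) : Prop :=
  (∀ j : Fin J, (j:ℕ) < (idx j).1 ∧ (idx j).1 < (idx j).2) ∧ Inv x (βf a ε J) idx

set_option maxHeartbeats 1000000 in
lemma step_exists
    (P : StrongDual ℝ (StrongDual ℝ X) →ₗ[ℝ] StrongDual ℝ (StrongDual ℝ X))
    (hP1 : ∀ y, P (P y) = P y)
    (hP2 : Set.range P = Set.range (fun v : X => inclusionInDoubleDual ℝ X v))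
    (hP3 : ∀ y, ‖y‖ = ‖P y‖ + ‖y - P y‖)
    {x : ℕ → X} {M : ℝ} (hM : ∀ k, ‖x k‖ ≤ M)
    {t : StrongDual ℝ (StrongDual ℝ X)} (ht : t ∈ weakStarClusterPoints x)
    {ε : ℝ} (hε : 0 < ε) (hεa : ε < 2 * ‖t - P t‖)
    {J : ℕ} (idx : Fin J → ℕ × ℕ) (h : Good x ‖t - P t‖ ε idx) :
    ∃ kp : ℕ × ℕ, Good x ‖t - P t‖ ε (Fin.snoc idx kp) := by
  classical
  set ι : X →L[ℝ] StrongDual ℝ (StrongDual ℝ X) := inclusionInDoubleDual ℝ X with hιdef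
  set s : StrongDual ℝ (StrongDual ℝ X) := t - P t with hsdef
  set a : ℝ := ‖s‖ with hadef
  have hM0 : (0:ℝ) ≤ M := le_trans (norm_nonneg _) (hM 0)
  have hι : ∀ v : X, P (ι v) = ι v := by
    intro v
    have hmem : ι v ∈ Set.range P := by
      rw [hP2]; exact ⟨v, rfl⟩
    obtain ⟨y₀, hy₀⟩ := hmem
    rw [← hy₀, hP1]
  have hs0 : P s = 0 := by
    rw [hsdef, show P (t - P t) = P t - P (P t) from map_sub P _ _, hP1, show P t - P t = 0 from sub_self (P t)]
  have hadd : ∀ (w σ : StrongDual ℝ (StrongDual ℝ X)), P w = w → P σ = 0 → ‖w + σ‖ = ‖w‖ + ‖σ‖ := by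
    intro w σ hw hσ
    have hPws : P (w + σ) = w := by rw [map_add, hw, hσ, add_zero]
    have := hP3 (w + σ)
    rw [hPws] at this
    simpa [show w + σ - w = σ from add_sub_cancel_left w σ] using this
  have ha_pos : 0 < a := by
    simp only [hadef]; linarith
  have haM : a ≤ M := by
    have h1 := hP3 t
    have h2 : ‖t‖ ≤ M := cluster_norm_le hM ht
    have := norm_nonneg (P t)
    simp only [hadef, hsdef]
    linarith
  set δ : ℝ := ε / 8 with hδdef
  have hδ : 0 < δ := by positivity
  set βJ : ℝ := βf a ε J with hβJdef
  have hpow1 : (1:ℝ) ≤ 2^J := one_le_pow₀ (by norm_num)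
  have hpowpos : (0:ℝ) < 2^J := by positivity
  have hβJa : 2*a - ε < βJ := by
    have : 0 < ε / 2^J := by positivity
    simp only [hβJdef, βf]; linarith
  have hβJpos : 0 < βJ := by linarith
  have hβJle : βJ ≤ 2*a := by
    have : ε / 2^J ≤ ε := div_le_self hε.le hpow1
    simp only [hβJdef, βf]; linarith
  set γ₀ : ℝ := (ε / 2^(J+1)) / (βJ + 2*M + 1) with hγ₀def
  have hden : 0 < βJ + 2*M + 1 := by linarith
  have hγ₀pos : 0 < γ₀ := by positivity
  have hγ₀lt1 : γ₀ < 1 := by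
    rw [hγ₀def, div_lt_one hden]
    have h1 : ε / 2^(J+1) ≤ ε / 2 := by
      apply div_le_div_of_nonneg_left hε.le (by norm_num)
      calc (2:ℝ) = 2^1 := by norm_num
      _ ≤ 2^(J+1) := pow_le_pow_right₀ (by norm_num) (by omega)
    linarith
  set T : ℝ := γ₀⁻¹ with hTdef
  have hT0 : 0 < T := by positivity
  set wv : Fin J → X := fun j => x (idx j).1 - x (idx j).2 with hwvdef
  -- the compact set of relevant combinations
  set D : Set (Fin J → ℝ) := {c | (∀ j, 0 ≤ c j) ∧ ∑ j, c j ≤ T} with hDdef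
  have hDclosed : IsClosed D := by
    have h1 : IsClosed {c : Fin J → ℝ | ∀ j, 0 ≤ c j} := by
      have : {c : Fin J → ℝ | ∀ j, 0 ≤ c j} = ⋂ j, {c | 0 ≤ c j} := by
        ext c; simp
      rw [this]
      exact isClosed_iInter (fun j => isClosed_le continuous_const (continuous_apply j))
    have h2 : IsClosed {c : Fin J → ℝ | ∑ j, c j ≤ T} :=
      isClosed_le (continuous_finset_sum _ (fun j _ => continuous_apply j)) continuous_const
    exact (h1.inter h2 : _)
  have hDbdd : IsBounded D := by
    refine (isBounded_closedBall (x := (0 : Fin J → ℝ)) (r := T)).subset ?_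
    intro c hc
    rw [mem_closedBall, dist_zero_right]
    refine (pi_norm_le_iff_of_nonneg hT0.le).2 (fun j => ?_)
    rw [Real.norm_eq_abs, abs_of_nonneg (hc.1 j)]
    calc c j ≤ ∑ i, c i := Finset.single_le_sum (fun i _ => hc.1 i) (Finset.mem_univ j)
    _ ≤ T := hc.2
  have hDcomp : IsCompact D := Metric.isCompact_of_isClosed_isBounded hDclosed hDbdd
  have hKcont : Continuous (fun c : Fin J → ℝ => ∑ j, c j • wv j) :=
    continuous_finset_sum _ (fun j _ => (continuous_apply j).smul continuous_const)
  set K : Set X := (fun c : Fin J → ℝ => ∑ j, c j • wv j) '' D with hKdef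
  have hKcomp : IsCompact K := hDcomp.image hKcont
  -- finite δ-net
  have hcover : K ⊆ ⋃ (y : K), ball (y : X) δ := by
    intro z hz
    exact Set.mem_iUnion.2 ⟨⟨z, hz⟩, mem_ball_self hδ⟩
  obtain ⟨Y, hY⟩ := hKcomp.elim_finite_subcover (fun y : K => ball (y : X) δ)
    (fun _ => isOpen_ball) hcover
  -- first pick
  have hfsel : ∀ yh : K, ∃ f : StrongDual ℝ X, ‖f‖ ≤ 1 ∧ ‖ι (yh : X) + s‖ - δ/2 < (ι (yh : X) + s) f :=
    fun yh => exists_approx_norming _ (by positivity)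
  choose fsel hfsel1 hfsel2 using hfsel
  obtain ⟨k₁, hk₁N, hk₁⟩ := cluster_frequently ht (Y.image fsel) (by positivity : (0:ℝ) < δ/2) (J+1)
  set v : StrongDual ℝ (StrongDual ℝ X) := ι (x k₁) - P t with hvdef
  have hPv : P v = v := by rw [hvdef, show P (ι (x k₁) - P t) = P (ι (x k₁)) - P (P t) from map_sub P _ _, hι, hP1]
  have hE1 : ∀ yh ∈ Y, ‖(yh : X)‖ + a - δ ≤ ‖ι (yh : X) + v‖ := by
    intro yh hyh
    have hf1 := hfsel1 yh
    have hf2 := hfsel2 yh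
    have hcond := hk₁ (fsel yh) (Finset.mem_image_of_mem fsel hyh)
    have hvs : (v - s) (fsel yh) = fsel yh (x k₁) - t (fsel yh) := by
      have h' : v - s = ι (x k₁) - t := by rw [hvdef, hsdef]; abel
      rw [h', ContinuousLinearMap.sub_apply]
      rfl
    have key : ‖ι (yh : X) + s‖ - δ < (ι (yh : X) + v) (fsel yh) := by
      have hev : (ι (yh : X) + v) (fsel yh)
          = (ι (yh : X) + s) (fsel yh) + ((v - s) (fsel yh)) := by
        simp only [ContinuousLinearMap.add_apply, ContinuousLinearMap.sub_apply]
        ring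
      rw [hev, hvs]
      have habs := abs_lt.1 hcond
      linarith only [habs.1, habs.2, hf2]
    have hns : ‖ι (yh : X) + s‖ = ‖(yh : X)‖ + a := by
      rw [hadd (ι (yh : X)) s (hι _) hs0, norm_incl_eq]
    have hevle := ev_le (ι (yh : X) + v) (fsel yh) (hf1)
    linarith only [key, hns, hevle]
  -- second pick
  have hgsel : ∀ yh : K, ∃ f : StrongDual ℝ X, ‖f‖ ≤ 1 ∧
      ‖ι (yh : X) + v - s‖ - δ/2 < (ι (yh : X) + v - s) f :=
    fun yh => exists_approx_norming _ (by positivity)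
  choose gsel hgsel1 hgsel2 using hgsel
  obtain ⟨k₂, hk₂N, hk₂⟩ := cluster_frequently ht (Y.image gsel)
    (by positivity : (0:ℝ) < δ/2) (k₁+1)
  set v' : StrongDual ℝ (StrongDual ℝ X) := ι (x k₂) - P t with hv'def
  have hE2 : ∀ yh ∈ Y, ‖(yh : X)‖ + 2*a - 2*δ ≤ ‖ι (yh : X) + v - v'‖ := by
    intro yh hyh
    have hg1 := hgsel1 yh
    have hg2 := hgsel2 yh
    have hcond := hk₂ (gsel yh) (Finset.mem_image_of_mem gsel hyh)
    have hv's : (v' - s) (gsel yh) = gsel yh (x k₂) - t (gsel yh) := by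
      have h' : v' - s = ι (x k₂) - t := by rw [hv'def, hsdef]; abel
      rw [h', ContinuousLinearMap.sub_apply]
      rfl
    have key : ‖ι (yh : X) + v - s‖ - δ < (ι (yh : X) + v - v') (gsel yh) := by
      have hev : (ι (yh : X) + v - v') (gsel yh)
          = (ι (yh : X) + v - s) (gsel yh) - ((v' - s) (gsel yh)) := by
        simp only [ContinuousLinearMap.add_apply, ContinuousLinearMap.sub_apply]
        ring
      rw [hev, hv's]
      have habs := abs_lt.1 hcond
      linarith only [habs.1, habs.2, hg2]
    have hns : ‖ι (yh : X) + v - s‖ = ‖ι (yh : X) + v‖ + a := by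
      have hw : P (ι (yh : X) + v) = ι (yh : X) + v := by
        rw [map_add, hι, hPv]
      have hσ : P (-s) = 0 := by rw [show P (-s) = -P s from map_neg P s, hs0]; exact @neg_zero (StrongDual ℝ (StrongDual ℝ X)) _
      have := hadd (ι (yh : X) + v) (-s) hw hσ
      rw [show ‖-s‖ = ‖s‖ from norm_neg s] at this
      rw [show ι (yh : X) + v - s = ι (yh : X) + v + -s from sub_eq_add_neg (ι (yh : X) + v) s, this, hadef]
    have hE1' := hE1 yh hyh
    have hevle := ev_le (ι (yh : X) + v - v') (gsel yh) (hg1)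
    linarith only [key, hns, hE1', hevle]
  -- the new difference vector
  set d : X := x k₁ - x k₂ with hddef
  have hιd : ι d = v - v' := by
    rw [hddef, map_sub, hvdef, hv'def]
    abel
  have hE3 : ∀ yh ∈ Y, ‖(yh : X)‖ + 2*a - 2*δ ≤ ‖(yh : X) + d‖ := by
    intro yh hyh
    have hE2' := hE2 yh hyh
    have heq : ‖(yh : X) + d‖ = ‖ι (yh : X) + v - v'‖ := by
      rw [← norm_incl_eq ((yh : X) + d), map_add, hιd]
      congr 1
      abel
    rw [heq]
    exact hE2'
  have hd2M : ‖d‖ ≤ 2*M := by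
    rw [hddef]
    calc ‖x k₁ - x k₂‖ ≤ ‖x k₁‖ + ‖x k₂‖ := norm_sub_le _ _
    _ ≤ 2*M := by linarith only [hM k₁, hM k₂]
  -- the extended family
  set kp : ℕ × ℕ := (k₁, k₂) with hkpdef
  set wN : Fin (J+1) → X := fun j => x ((Fin.snoc idx kp : Fin (J+1) → ℕ × ℕ) j).1
      - x ((Fin.snoc idx kp : Fin (J+1) → ℕ × ℕ) j).2 with hwNdef
  have hwNc : ∀ i : Fin J, wN i.castSucc = wv i := by
    intro i; simp only [hwNdef, Fin.snoc_castSucc, hwvdef]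
  have hwNl : wN (Fin.last J) = d := by
    simp only [hwNdef, Fin.snoc_last, hkpdef, hddef]
  have hβsucc : βf a ε (J+1) = βJ - ε/2^(J+1) := by
    simp only [hβJdef, βf, pow_succ]
    field_simp
    ring
  have hpow2 : ε/2^(J+1) ≤ ε/2 := by
    apply div_le_div_of_nonneg_left hε.le (by norm_num)
    calc (2:ℝ) = 2^1 := by norm_num
    _ ≤ 2^(J+1) := pow_le_pow_right₀ (by norm_num) (by omega)
  have hpowp : (0:ℝ) < ε/2^(J+1) := by positivity
  have hβm : βf a ε (J+1) ≤ βJ := by rw [hβsucc]; linarith only [hpowp]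
  have hβ1pos : 0 < βf a ε (J+1) := by
    simp only [βf]
    linarith only [hεa, hpowp]
  -- normalized claim
  have claim : ∀ c : Fin (J+1) → ℝ, (∀ j, 0 ≤ c j) → (∑ j, c j) = 1 →
      βf a ε (J+1) ≤ ‖∑ j, c j • wN j‖ := by
    intro c hc hc1
    set cc : Fin J → ℝ := fun i => c i.castSucc with hccdef
    set γ : ℝ := c (Fin.last J) with hγdef
    have hsplit : ∑ j, c j • wN j = (∑ i, cc i • wv i) + γ • d := by
      rw [Fin.sum_univ_castSucc]
      congr 1
      · exact Finset.sum_congr rfl (fun i _ => by rw [hwNc i, hccdef])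
      · rw [hwNl, hγdef]
    have hsum : (∑ i, cc i) + γ = 1 := by
      simp only [hccdef, hγdef]
      rw [← Fin.sum_univ_castSucc (f := fun j => c j)]
      exact hc1
    have hccnn : ∀ i, 0 ≤ cc i := fun i => hc _
    have hγnn : 0 ≤ γ := hc _
    have hccsumnn : 0 ≤ ∑ i, cc i := Finset.sum_nonneg (fun i _ => hccnn i)
    have hγle1 : γ ≤ 1 := by linarith only [hsum, hccsumnn]
    set y : X := ∑ i, cc i • wv i with hydef
    have hy : βJ * (∑ i, cc i) ≤ ‖y‖ := h.2 cc hccnn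
    have hccsum : ∑ i, cc i = 1 - γ := by linarith only [hsum]
    rw [hccsum] at hy
    rw [hsplit]
    by_cases hγcase : γ ≤ γ₀
    · -- small last coefficient : triangle inequality
      have h0 : ‖γ • d‖ = γ * ‖d‖ := by
        rw [norm_smul, Real.norm_eq_abs, abs_of_nonneg hγnn]
      have htri : ‖y‖ ≤ ‖y + γ • d‖ + γ * ‖d‖ := by
        calc ‖y‖ = ‖(y + γ • d) - γ • d‖ := by rw [add_sub_cancel_right]
        _ ≤ ‖y + γ • d‖ + ‖γ • d‖ := norm_sub_le _ _
        _ = ‖y + γ • d‖ + γ * ‖d‖ := by rw [h0]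
      have hγd : γ * ‖d‖ ≤ γ * (2*M) := mul_le_mul_of_nonneg_left hd2M hγnn
      have hγ₀bound : γ * (βJ + 2*M) ≤ ε / 2^(J+1) := by
        have h1 : γ * (βJ + 2*M) ≤ γ₀ * (βJ + 2*M) :=
          mul_le_mul_of_nonneg_right hγcase (by linarith only [hβJpos, hM0])
        have h2 : γ₀ * (βJ + 2*M) ≤ γ₀ * (βJ + 2*M + 1) :=
          mul_le_mul_of_nonneg_left (by linarith only []) hγ₀pos.le
        have h3 : γ₀ * (βJ + 2*M + 1) = ε / 2^(J+1) := by
          rw [hγ₀def]; exact div_mul_cancel₀ _ hden.ne'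
        linarith only [h1, h2, h3]
      have hexp : βJ * (1 - γ) = βJ - γ * βJ := by ring
      rw [hexp] at hy
      rw [hβsucc]
      have hμ : γ * (βJ + 2*M) = γ * βJ + γ * (2*M) := by ring
      linarith only [htri, hγd, hγ₀bound, hy, hμ]
    · -- large last coefficient : use the net
      push_neg at hγcase
      have hγpos : 0 < γ := lt_trans hγ₀pos hγcase
      set y'' : X := γ⁻¹ • y with hy''def
      have hy''K : y'' ∈ K := by
        refine ⟨fun i => γ⁻¹ * cc i,
          ⟨fun i => mul_nonneg (inv_nonneg.2 hγnn) (hccnn i), ?_⟩, ?_⟩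
        · have h1 : ∑ i, γ⁻¹ * cc i = γ⁻¹ * ∑ i, cc i := by rw [Finset.mul_sum]
          rw [h1, hccsum]
          have h3 : γ⁻¹ ≤ T := by
            rw [hTdef]
            exact inv_anti₀ hγ₀pos hγcase.le
          calc γ⁻¹ * (1 - γ) ≤ γ⁻¹ * 1 := by
                refine mul_le_mul_of_nonneg_left (by linarith only [hγnn])
                  (inv_nonneg.2 hγnn)
          _ = γ⁻¹ := mul_one _
          _ ≤ T := h3
        · rw [hy''def, hydef, Finset.smul_sum]
          exact Finset.sum_congr rfl (fun i _ => by rw [smul_smul])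
      obtain ⟨yh, hyhY, hyhball⟩ := Set.mem_iUnion₂.1 (hY hy''K)
      have hdist : ‖y'' - (yh : X)‖ < δ := by
        rw [mem_ball, dist_eq_norm] at hyhball
        exact hyhball
      have hnyh : ‖y''‖ - δ ≤ ‖(yh : X)‖ := by
        have habs := abs_le.1 (abs_norm_sub_norm_le y'' (yh : X))
        linarith only [habs.1, habs.2, hdist]
      have h1 : ‖(yh : X) + d‖ - ‖y'' - (yh : X)‖ ≤ ‖y'' + d‖ := by
        have heq2 : (yh : X) + d = (y'' + d) - (y'' - (yh : X)) := by abel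
        calc ‖(yh : X) + d‖ - ‖y'' - (yh : X)‖
            = ‖(y'' + d) - (y'' - (yh : X))‖ - ‖y'' - (yh : X)‖ := by rw [← heq2]
        _ ≤ (‖y'' + d‖ + ‖y'' - (yh : X)‖) - ‖y'' - (yh : X)‖ := by
            linarith only [norm_sub_le (y'' + d) (y'' - (yh : X))]
        _ = ‖y'' + d‖ := by ring
      have hE3' := hE3 yh hyhY
      have h2 : ‖y''‖ + 2*a - 4*δ ≤ ‖y'' + d‖ := by
        linarith only [h1, hE3', hnyh, hdist]
      have heq : ‖y + γ • d‖ = γ * ‖y'' + d‖ := by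
        have hexp : y + γ • d = γ • (y'' + d) := by
          rw [smul_add, hy''def, smul_smul, mul_inv_cancel₀ hγpos.ne', one_smul]
        rw [hexp, norm_smul, Real.norm_eq_abs, abs_of_nonneg hγnn]
      have hyy : γ * ‖y''‖ = ‖y‖ := by
        rw [hy''def, norm_smul, Real.norm_eq_abs, abs_inv, abs_of_nonneg hγnn]
        field_simp
      have h4δ : βf a ε (J+1) ≤ 2*a - 4*δ := by
        have : βf a ε (J+1) = 2*a - ε + ε/2^(J+1) := by simp [βf]
        rw [this, hδdef]
        linarith only [hpow2]
      set βf1 : ℝ := βf a ε (J+1) with hβf1def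
      have s1 : γ * (‖y''‖ + (2*a - 4*δ)) ≤ γ * ‖y'' + d‖ :=
        mul_le_mul_of_nonneg_left (by linarith only [h2]) hγnn
      have s2 : γ * (‖y''‖ + (2*a-4*δ)) = ‖y‖ + γ*(2*a-4*δ) := by
        rw [mul_add, hyy]
      have s3 : γ * βf1 ≤ γ*(2*a-4*δ) := mul_le_mul_of_nonneg_left h4δ hγnn
      have s5 : βf1 * (1-γ) ≤ βJ * (1-γ) :=
        mul_le_mul_of_nonneg_right hβm (by linarith only [hγle1])
      rw [heq]
      have hexp1 : βf1 * (1-γ) = βf1 - γ * βf1 := by ring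
      have hexp2 : βJ * (1-γ) = βJ * (1 - γ) := rfl
      linarith only [s1, s2, s3, s5, hy, hyy, hexp1]
  -- pass from the normalized claim to the unnormalized invariant
  refine ⟨kp, ?_, ?_⟩
  · intro j
    refine Fin.lastCases ?_ (fun i => ?_) j
    · rw [Fin.snoc_last]
      refine ⟨?_, ?_⟩
      · simp only [Fin.val_last, hkpdef]
        omega
      · simp only [hkpdef]
        omega
    · rw [Fin.snoc_castSucc]
      have := h.1 i
      simpa using this
  · show Inv x (βf a ε (J+1)) (Fin.snoc idx kp)
    intro c hcnn
    show βf a ε (J+1) * (∑ j, c j) ≤ ‖∑ j, c j • wN j‖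
    have hSnn : 0 ≤ ∑ j, c j := Finset.sum_nonneg (fun j _ => hcnn j)
    rcases eq_or_lt_of_le hSnn with hS0 | hSpos
    · have hz : βf a ε (J+1) * (∑ j, c j) = 0 := by rw [← hS0, mul_zero]
      rw [hz]
      exact norm_nonneg _
    · have hc1 : ∀ j, 0 ≤ c j / (∑ i, c i) := fun j => div_nonneg (hcnn j) hSpos.le
      have hcs : ∑ j, c j / (∑ i, c i) = 1 := by
        rw [← Finset.sum_div]
        exact div_self hSpos.ne'
      have hcl := claim (fun j => c j / (∑ i, c i)) hc1 hcs
      have hrw : ∑ j, (c j / (∑ i, c i)) • wN j = (∑ i, c i)⁻¹ • ∑ j, c j • wN j := by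
        rw [Finset.smul_sum]
        exact Finset.sum_congr rfl (fun j _ => by
          rw [smul_smul, div_eq_inv_mul])
      rw [hrw, norm_smul, Real.norm_eq_abs, abs_inv, abs_of_pos hSpos] at hcl
      have := mul_le_mul_of_nonneg_left hcl hSpos.le
      calc βf a ε (J+1) * (∑ j, c j) = (∑ j, c j) * βf a ε (J+1) := mul_comm _ _
      _ ≤ (∑ j, c j) * ((∑ j, c j)⁻¹ * ‖∑ j, c j • wN j‖) := this
      _ = ‖∑ j, c j • wN j‖ := by
          rw [← mul_assoc, mul_inv_cancel₀ hSpos.ne', one_mul]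


end S3

namespace S3

variable {X : Type*} [NormedAddCommGroup X] [NormedSpace ℝ X]

set_option maxHeartbeats 1000000 in
lemma exists_far_pair
    (P : StrongDual ℝ (StrongDual ℝ X) →ₗ[ℝ] StrongDual ℝ (StrongDual ℝ X))
    (hP1 : ∀ y, P (P y) = P y)
    (hP2 : Set.range P = Set.range (fun v : X => inclusionInDoubleDual ℝ X v))
    (hP3 : ∀ y, ‖y‖ = ‖P y‖ + ‖y - P y‖)
    {x : ℕ → X} {M : ℝ} (hM : ∀ k, ‖x k‖ ≤ M)
    {t : StrongDual ℝ (StrongDual ℝ X)} (ht : t ∈ weakStarClusterPoints x)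
    {ε : ℝ} (hε : 0 < ε) :
    ∃ p ∈ weakStarClusterPoints x, ∃ q ∈ weakStarClusterPoints x,
      2 * ‖t - P t‖ - ε ≤ ‖p - q‖ := by
  classical
  by_cases hεa : ε < 2 * ‖t - P t‖
  swap
  · push_neg at hεa
    refine ⟨t, ht, t, ht, ?_⟩
    rw [show t - t = 0 from sub_self t, norm_zero (E := StrongDual ℝ (StrongDual ℝ X))]
    linarith only [hεa]
  set a : ℝ := ‖t - P t‖ with hadef
  have hM0 : (0:ℝ) ≤ M := le_trans (norm_nonneg _) (hM 0)
  -- iterated construction of pairs of indices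
  have hstep : ∀ (J : ℕ) (idx : Fin J → ℕ × ℕ), Good x a ε idx →
      ∃ kp : ℕ × ℕ, Good x a ε (Fin.snoc idx kp) :=
    fun J idx h => step_exists P hP1 hP2 hP3 hM ht hε hεa idx h
  have hbase : Good x a ε (fun j : Fin 0 => j.elim0) := by
    constructor
    · exact fun j => j.elim0
    · intro c hc
      simp
  let ch : ∀ J : ℕ, {idx : Fin J → ℕ × ℕ // Good x a ε idx} := fun J =>
    Nat.rec ⟨fun j => j.elim0, hbase⟩
      (fun J prev => ⟨Fin.snoc prev.1 (hstep J prev.1 prev.2).choose,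
        (hstep J prev.1 prev.2).choose_spec⟩) J
  have hcoh : ∀ (J : ℕ) (j : Fin J), (ch (J+1)).1 j.castSucc = (ch J).1 j := by
    intro J j
    have hrfl : (ch (J+1)).1 = Fin.snoc (ch J).1 (hstep J (ch J).1 (ch J).2).choose := rfl
    rw [hrfl, Fin.snoc_castSucc]
  set pr : ℕ → ℕ × ℕ := fun j => (ch (j+1)).1 (Fin.last j) with hpr
  have hch : ∀ (J : ℕ) (j : Fin J), (ch J).1 j = pr j.val := by
    intro J
    induction J with
    | zero => exact fun j => j.elim0
    | succ J ih =>
      intro j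
      refine Fin.lastCases ?_ (fun i => ?_) j
      · rfl
      · have h1 : (ch (J+1)).1 i.castSucc = (ch J).1 i := hcoh J i
        rw [h1, ih i]
        rfl
  have hm : ∀ j : ℕ, j < (pr j).1 ∧ (pr j).1 < (pr j).2 := by
    intro j
    have h0 := (ch (j+1)).2.1 (Fin.last j)
    rw [hch (j+1) (Fin.last j)] at h0
    simpa using h0
  -- the invariant for the final sequence of pairs
  have hInv : ∀ (J : ℕ) (c : Fin J → ℝ), (∀ j, 0 ≤ c j) → (∑ j, c j) = 1 →
      (2*a - ε) ≤ ‖∑ j, c j • (x (pr j.val).1 - x (pr j.val).2)‖ := by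
    intro J c hc hc1
    have h2 := (ch J).2.2 c hc
    have hre : ∑ j, c j • (x ((ch J).1 j).1 - x ((ch J).1 j).2)
        = ∑ j, c j • (x (pr j.val).1 - x (pr j.val).2) :=
      Finset.sum_congr rfl (fun j _ => by rw [hch J j])
    rw [hre, hc1, mul_one] at h2
    have hβ : 2*a - ε ≤ βf a ε J := by
      have : (0:ℝ) ≤ ε / 2^J := by positivity
      simp only [βf]
      linarith only [this]
    linarith only [h2, hβ]
  -- separating functionals for each finite stage
  have hfm : ∀ J : ℕ, ∃ f : StrongDual ℝ X, ‖f‖ ≤ 1 ∧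
      ∀ j : Fin J, (2*a-ε) ≤ f (x (pr j.val).1 - x (pr j.val).2) := by
    intro J
    exact exists_sep_functional J (fun j => x (pr j.val).1 - x (pr j.val).2)
      (by linarith only [hεa] : (0:ℝ) < 2*a - ε) (hInv J)
  choose fm hfm1 hfm2 using hfm
  -- a weak* cluster point of these functionals
  have hcompf : IsCompact (WeakDual.toStrongDual ⁻¹' closedBall (0 : StrongDual ℝ X) 1) :=
    WeakDual.isCompact_closedBall (0 : StrongDual ℝ X) 1
  have hsubf : Filter.map (fun J => StrongDual.toWeakDual (fm J)) atTop ≤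
      Filter.principal (WeakDual.toStrongDual ⁻¹' closedBall (0 : StrongDual ℝ X) 1) := by
    rw [Filter.le_principal_iff, Filter.mem_map]
    refine Filter.Eventually.of_forall (fun J => ?_)
    simp only [Set.mem_preimage, Set.mem_setOf_eq, mem_closedBall, dist_zero_right]
    exact hfm1 J
  obtain ⟨gw, _, hgw⟩ := hcompf.exists_mapClusterPt (f := atTop) hsubf
  set g : StrongDual ℝ X := WeakDual.toStrongDual gw with hgdef
  have hgnorm : ‖g‖ ≤ 1 := by
    have hmem := mapClusterPt_mem_closed hgw (WeakDual.isClosed_closedBall 0 1)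
      (by
        refine Filter.Eventually.of_forall (fun J => ?_)
        simp only [Set.mem_preimage, mem_closedBall, dist_zero_right]
        exact hfm1 J)
    simpa using hmem
  have hgval : ∀ j : ℕ, (2*a-ε) ≤ g (x (pr j).1 - x (pr j).2) := by
    intro j
    have hev : MapClusterPt (gw (x (pr j).1 - x (pr j).2)) atTop
        (fun J => (fm J) (x (pr j).1 - x (pr j).2)) :=
      hgw.continuousAt_comp (WeakDual.eval_continuous _).continuousAt
    refine mapClusterPt_mem_closed hev isClosed_Ici ?_
    refine Filter.eventually_atTop.2 ⟨j+1, fun J hJ => ?_⟩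
    exact hfm2 J ⟨j, by omega⟩
  -- Bolzano-Weierstrass on both real value sequences
  set m : ℕ → ℕ := fun j => (pr j).1 with hmdef
  set n : ℕ → ℕ := fun j => (pr j).2 with hndef
  have hgsplit : ∀ j, (2*a-ε) ≤ g (x (m j)) - g (x (n j)) := by
    intro j
    have h0 := hgval j
    rwa [map_sub] at h0
  have hball : ∀ k : ℕ, g (x k) ∈ closedBall (0:ℝ) M := by
    intro k
    rw [mem_closedBall, dist_zero_right, Real.norm_eq_abs]
    have h1 : ‖g (x k)‖ ≤ ‖g‖ * ‖x k‖ := g.le_opNorm (x k)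
    have h2 : ‖g‖ * ‖x k‖ ≤ 1 * M :=
      mul_le_mul hgnorm (hM k) (norm_nonneg _) zero_le_one
    rw [Real.norm_eq_abs] at h1
    linarith only [h1, h2]
  obtain ⟨Lm, _, ρ₁, hρ₁mono, hρ₁tend⟩ :=
    tendsto_subseq_of_bounded isBounded_closedBall (fun j => hball (m j))
  obtain ⟨Ln, _, ρ₂, hρ₂mono, hρ₂tend⟩ :=
    tendsto_subseq_of_bounded isBounded_closedBall (fun i => hball (n (ρ₁ i)))
  have h1 : Tendsto (fun i => g (x (m (ρ₁ (ρ₂ i))))) atTop (𝓝 Lm) :=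
    hρ₁tend.comp hρ₂mono.tendsto_atTop
  have h2 : Tendsto (fun i => g (x (n (ρ₁ (ρ₂ i))))) atTop (𝓝 Ln) := hρ₂tend
  have hdiff : (2*a-ε) ≤ Lm - Ln := by
    refine ge_of_tendsto (h1.sub h2) ?_
    exact Filter.Eventually.of_forall (fun i => hgsplit (ρ₁ (ρ₂ i)))
  -- cluster points of the two subsequences in the bidual
  have htendm : Tendsto m atTop atTop :=
    tendsto_atTop_mono (fun j => (hm j).1.le) tendsto_id
  have htendn : Tendsto n atTop atTop :=
    tendsto_atTop_mono (fun j => (lt_trans (hm j).1 (hm j).2).le) tendsto_id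
  have hφ1 : Tendsto (fun i => m (ρ₁ (ρ₂ i))) atTop atTop :=
    htendm.comp ((hρ₁mono.comp hρ₂mono).tendsto_atTop)
  have hφ2 : Tendsto (fun i => n (ρ₁ (ρ₂ i))) atTop atTop :=
    htendn.comp ((hρ₁mono.comp hρ₂mono).tendsto_atTop)
  obtain ⟨p, hpA, hpcl⟩ := exists_cluster_of_subseq hM _ hφ1
  obtain ⟨q, hqA, hqcl⟩ := exists_cluster_of_subseq hM _ hφ2
  have hpg : p g = Lm := by
    have hev : MapClusterPt (p g) atTop (fun i => g (x (m (ρ₁ (ρ₂ i))))) :=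
      hpcl.continuousAt_comp (WeakDual.eval_continuous g).continuousAt
    exact mapClusterPt_eq_limit hev h1
  have hqg : q g = Ln := by
    have hev : MapClusterPt (q g) atTop (fun i => g (x (n (ρ₁ (ρ₂ i))))) :=
      hqcl.continuousAt_comp (WeakDual.eval_continuous g).continuousAt
    exact mapClusterPt_eq_limit hev h2
  refine ⟨p, hpA, q, hqA, ?_⟩
  have hsubval : (p - q) g = Lm - Ln := by
    rw [ContinuousLinearMap.sub_apply, hpg, hqg]
  calc 2*a - ε ≤ Lm - Ln := hdiff
  _ = (p - q) g := hsubval.symm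
  _ ≤ ‖p - q‖ := ev_le _ _ hgnorm

end S3
/-- If `X` is an `L`-embedded Banach space, then for every bounded sequence
`(x k)` in `X`, `2 · d̂(clust_{X**}(x_k), X) ≤ δ_X(x_k)`. -/
theorem statement3 {X : Type*} [NormedAddCommGroup X] [NormedSpace ℝ X] [CompleteSpace X]
    (hL : IsLEmbedded X) (x : ℕ → X) (hb : ∃ M : ℝ, ∀ k, ‖x k‖ ≤ M) :
    2 * dHat (weakStarClusterPoints x) ≤ deltaSeq x := by
  obtain ⟨M, hM⟩ := hb
  obtain ⟨P, hP1, hP2, hP3⟩ := hL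
  have hbdd : IsBounded (weakStarClusterPoints x) := by
    refine (isBounded_closedBall (x := (0 : StrongDual ℝ (StrongDual ℝ X))) (r := M)).subset ?_
    intro p hp
    rw [mem_closedBall, show dist p 0 = ‖p‖ from dist_zero_right p]
    exact cluster_norm_le hM hp
  have hdiam0 : 0 ≤ Metric.diam (weakStarClusterPoints x) := Metric.diam_nonneg
  have key : ∀ y ∈ weakStarClusterPoints x,
      2 * Metric.infDist y (Set.range fun v : X => inclusionInDoubleDual ℝ X v)
        ≤ Metric.diam (weakStarClusterPoints x) := by
    intro y hy
    have h1 : Metric.infDist y (Set.range fun v : X => inclusionInDoubleDual ℝ X v)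
        ≤ ‖y - P y‖ := by
      have hmem : P y ∈ Set.range (fun v : X => inclusionInDoubleDual ℝ X v) := by
        rw [← hP2]; exact ⟨y, rfl⟩
      calc Metric.infDist y (Set.range fun v : X => inclusionInDoubleDual ℝ X v)
          ≤ dist y (P y) := Metric.infDist_le_dist_of_mem hmem
      _ = ‖y - P y‖ := dist_eq_norm (E := StrongDual ℝ (StrongDual ℝ X)) _ _
    have h2 : 2 * ‖y - P y‖ ≤ Metric.diam (weakStarClusterPoints x) := by
      by_contra hcon
      push_neg at hcon
      obtain ⟨p, hp, q, hq, hpq⟩ := S3.exists_far_pair P hP1 hP2 hP3 hM hy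
        (ε := (2*‖y - P y‖ - Metric.diam (weakStarClusterPoints x))/2) (by linarith)
      have hd : dist p q ≤ Metric.diam (weakStarClusterPoints x) :=
        Metric.dist_le_diam_of_mem hbdd hp hq
      rw [show dist p q = ‖p - q‖ from dist_eq_norm (E := StrongDual ℝ (StrongDual ℝ X)) p q] at hd
      linarith
    have h3 : 0 ≤ Metric.infDist y (Set.range fun v : X => inclusionInDoubleDual ℝ X v) :=
      Metric.infDist_nonneg
    linarith
  have hsup : dHat (weakStarClusterPoints x) ≤ Metric.diam (weakStarClusterPoints x) / 2 := by
    apply Real.sSup_le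
    · rintro z ⟨y, hy, rfl⟩
      have := key y hy
      linarith
    · linarith
  show 2 * dHat (weakStarClusterPoints x) ≤ Metric.diam (weakStarClusterPoints x)
  linarith
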